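/- Let f : ℝ^d → ℝ be L-smooth, and let f, h be twice continuously differentiable and satisfy δ-Hessian similarity with δ > 0. Let K ≥ 1 be an integer, let 1 ≤ k ≤ K, and let 0 < η ≤ min(1/L, 1/(192δK)). Let x, y, m ∈ ℝ^d, set e = m − ∇f(x) + ∇h(x) and y⁺ = y − η(∇h(y) + m). Then f(y⁺) + δ(1 + 2/K)^{K−k}‖y⁺ − x‖² ≤ f(y) + δ(1 + 2/K)^{K−k+1}‖y − x‖² − (η/4)‖∇f(y)‖² + 2η‖e‖². -/

import Mathlib

open scoped RealInnerProductSpace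

section Aux
variable {E : Type*} [NormedAddCommGroup E] [InnerProductSpace ℝ E] [CompleteSpace E]

lemma grad_inner (f : E → ℝ) (z v : E) : ⟪gradient f z, v⟫ = fderiv ℝ f z v := by
  rw [gradient, InnerProductSpace.toDual_symm_apply]

lemma my_descent (f : E → ℝ) (L : ℝ) (hfd : Differentiable ℝ f)
    (hsmooth : ∀ x y : E, ‖gradient f x - gradient f y‖ ≤ L * ‖x - y‖) (y v : E) :
    f (y + v) ≤ f y + ⟪gradient f y, v⟫ + L / 2 * ‖v‖ ^ 2 := by
  have key : ∀ t : ℝ, HasDerivAt (fun t : ℝ => f (y + t • v))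
      ⟪gradient f (y + t • v), v⟫ t := by
    intro t
    have h1 : HasDerivAt (fun t : ℝ => y + t • v) v t := by
      simpa using ((hasDerivAt_id t).smul_const v).const_add y
    have h2 := (hfd (y + t • v)).hasFDerivAt.comp_hasDerivAt t h1
    rw [grad_inner]
    exact h2
  set C : ℝ := ⟪gradient f y, v⟫ with hC
  set g : ℝ → ℝ := fun t => f (y + t • v) - t * C - t ^ 2 * (L * ‖v‖ ^ 2 / 2) with hg
  have hg' : ∀ t : ℝ, HasDerivAt g
      (⟪gradient f (y + t • v), v⟫ - C - t * (L * ‖v‖ ^ 2)) t := by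
    intro t
    have h3 : HasDerivAt (fun t : ℝ => t * C) C t := hasDerivAt_mul_const C
    have h4 : HasDerivAt (fun t : ℝ => t ^ 2 * (L * ‖v‖ ^ 2 / 2))
        (t * (L * ‖v‖ ^ 2)) t := by
      have := (hasDerivAt_pow 2 t).mul_const (L * ‖v‖ ^ 2 / 2)
      convert this using 1
      · rfl
      · rfl
      · push_cast
        ring
    have := ((key t).sub h3).sub h4
    exact this
  have hanti : AntitoneOn g (Set.Icc (0:ℝ) 1) := by
    apply antitoneOn_of_deriv_nonpos (convex_Icc 0 1)
    · exact (Differentiable.continuous (fun t => (hg' t).differentiableAt)).continuousOn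
    · exact fun t _ => (hg' t).differentiableAt.differentiableWithinAt
    · intro t ht
      rw [interior_Icc] at ht
      rw [(hg' t).deriv]
      have hcs : ⟪gradient f (y + t • v) - gradient f y, v⟫ ≤
          ‖gradient f (y + t • v) - gradient f y‖ * ‖v‖ := real_inner_le_norm _ _
      have hlip := hsmooth (y + t • v) y
      have hz : (y + t • v) - y = t • v := by abel
      rw [hz, norm_smul] at hlip
      rw [Real.norm_eq_abs, abs_of_pos ht.1] at hlip
      rw [inner_sub_left] at hcs
      nlinarith [norm_nonneg v, mul_le_mul_of_nonneg_right hlip (norm_nonneg v), ht.1.le]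
  have h01 := hanti (Set.left_mem_Icc.mpr zero_le_one) (Set.right_mem_Icc.mpr zero_le_one)
      zero_le_one
  simp only [hg, one_smul, zero_smul, add_zero, one_pow, one_mul, zero_mul, sub_zero,
    zero_pow, mul_zero] at h01
  linarith [h01]

lemma norm_fderiv_eq_iteratedFDeriv_one {F : Type*} [NormedAddCommGroup F] [NormedSpace ℝ F]
    (g : E → F) (z : E) : ‖fderiv ℝ g z‖ = ‖iteratedFDeriv ℝ 1 g z‖ := by
  apply le_antisymm
  · apply ContinuousLinearMap.opNorm_le_bound _ (norm_nonneg _)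
    intro u
    have : fderiv ℝ g z u = iteratedFDeriv ℝ 1 g z (fun _ => u) := by
      rw [iteratedFDeriv_one_apply]
    rw [this]
    calc ‖iteratedFDeriv ℝ 1 g z (fun _ => u)‖
        ≤ ‖iteratedFDeriv ℝ 1 g z‖ * ∏ _i : Fin 1, ‖u‖ :=
          (iteratedFDeriv ℝ 1 g z).le_opNorm _
      _ = ‖iteratedFDeriv ℝ 1 g z‖ * ‖u‖ := by simp
  · refine ContinuousMultilinearMap.opNorm_le_bound (norm_nonneg _) fun m => ?_
    rw [iteratedFDeriv_one_apply]
    calc ‖fderiv ℝ g z (m 0)‖ ≤ ‖fderiv ℝ g z‖ * ‖m 0‖ :=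
          (fderiv ℝ g z).le_opNorm _
      _ = ‖fderiv ℝ g z‖ * ∏ i : Fin 1, ‖m i‖ := by simp [Fin.prod_univ_one]

lemma my_grad_lip (f h : E → ℝ) (δ : ℝ)
    (hf : ContDiff ℝ 2 f) (hh : ContDiff ℝ 2 h)
    (hsim : ∀ z, ‖iteratedFDeriv ℝ 2 f z - iteratedFDeriv ℝ 2 h z‖ ≤ δ) (x y : E) :
    ‖(gradient f y - gradient h y) - (gradient f x - gradient h x)‖ ≤ δ * ‖y - x‖ := by
  set φ : E → ℝ := fun z => f z - h z with hφdef
  have hφ : ContDiff ℝ 2 φ := hf.sub hh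
  have hsub : ∀ z, iteratedFDeriv ℝ 2 φ z
      = iteratedFDeriv ℝ 2 f z - iteratedFDeriv ℝ 2 h z := by
    intro z
    have h1 : iteratedFDeriv ℝ 2 (fun w => f w + (-h) w) z
        = iteratedFDeriv ℝ 2 f z + iteratedFDeriv ℝ 2 (-h) z :=
      iteratedFDeriv_add_apply' hf.contDiffAt hh.neg.contDiffAt
    have h2 : iteratedFDeriv ℝ 2 (-h) z = -iteratedFDeriv ℝ 2 h z := iteratedFDeriv_neg_apply
    have h3 : φ = fun w => f w + (-h) w := by ext w; simp [hφdef, sub_eq_add_neg]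
    rw [h3, h1, h2, sub_eq_add_neg]
  have hbound : ∀ z, ‖iteratedFDeriv ℝ 2 φ z‖ ≤ δ := fun z => by rw [hsub z]; exact hsim z
  have hψ : ContDiff ℝ 1 (fderiv ℝ φ) := hφ.fderiv_right (by norm_num)
  have hlip : ‖fderiv ℝ φ y - fderiv ℝ φ x‖ ≤ δ * ‖y - x‖ := by
    refine Convex.norm_image_sub_le_of_norm_fderiv_le
      (fun z _ => hψ.differentiable one_ne_zero z) ?_ convex_univ
      (Set.mem_univ x) (Set.mem_univ y)
    intro z _
    rw [norm_fderiv_eq_iteratedFDeriv_one, norm_iteratedFDeriv_fderiv]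
    exact hbound z
  have hgrad : ∀ z : E, (gradient f z - gradient h z)
      = (InnerProductSpace.toDual ℝ E).symm (fderiv ℝ φ z) := by
    intro z
    have : fderiv ℝ φ z = fderiv ℝ f z - fderiv ℝ h z :=
      fderiv_sub (hf.differentiable (by norm_num) z) (hh.differentiable (by norm_num) z)
    rw [this, map_sub]
    rfl
  calc ‖(gradient f y - gradient h y) - (gradient f x - gradient h x)‖
      = ‖(InnerProductSpace.toDual ℝ E).symm (fderiv ℝ φ y - fderiv ℝ φ x)‖ := by
        rw [hgrad, hgrad, ← map_sub]
    _ = ‖fderiv ℝ φ y - fderiv ℝ φ x‖ := LinearIsometryEquiv.norm_map _ _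
    _ ≤ δ * ‖y - x‖ := hlip

end Aux

set_option maxHeartbeats 1000000 in
/-- one-step potential decrease (noiseless case) for the
bias-corrected local update `y⁺ = y − η(∇h(y) + m)`. -/
theorem stmt_5 {d : ℕ} (f h : EuclideanSpace ℝ (Fin d) → ℝ) (L δ : ℝ)
    (hL : 0 < L) (hδ : 0 < δ)
    (hfd : Differentiable ℝ f)
    (hsmooth : ∀ x y : EuclideanSpace ℝ (Fin d),
      ‖gradient f x - gradient f y‖ ≤ L * ‖x - y‖)
    (hf : ContDiff ℝ 2 f) (hh : ContDiff ℝ 2 h)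
    (hsim : ∀ x, ‖iteratedFDeriv ℝ 2 f x - iteratedFDeriv ℝ 2 h x‖ ≤ δ)
    (K : ℕ) (hK : 1 ≤ K) (k : ℕ) (hk1 : 1 ≤ k) (hkK : k ≤ K)
    (η : ℝ) (hη0 : 0 < η) (hη : η ≤ min (1 / L) (1 / (192 * δ * K)))
    (x y m : EuclideanSpace ℝ (Fin d))
    (e : EuclideanSpace ℝ (Fin d)) (he : e = m - gradient f x + gradient h x)
    (yplus : EuclideanSpace ℝ (Fin d))
    (hyplus : yplus = y - η • (gradient h y + m)) :
    f yplus + δ * (1 + 2 / K) ^ (K - k) * ‖yplus - x‖ ^ 2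
      ≤ f y + δ * (1 + 2 / K) ^ (K - k + 1) * ‖y - x‖ ^ 2
        - (η / 4) * ‖gradient f y‖ ^ 2 + 2 * η * ‖e‖ ^ 2 := by
  set Kr : ℝ := (K : ℝ) with hKrdef
  have hKr1 : (1:ℝ) ≤ Kr := by rw [hKrdef]; exact_mod_cast hK
  have hKr0 : (0:ℝ) < Kr := lt_of_lt_of_le one_pos hKr1
  set G := gradient f y with hGdef
  set g := gradient h y + m with hgdef
  set Δ := (gradient h y - gradient f y) - (gradient h x - gradient f x) with hΔdef
  set a := ‖G‖ with hadef
  set b := ‖Δ‖ with hbdef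
  set c := ‖e‖ with hcdef
  set r := ‖y - x‖ with hrdef
  set q := ‖g‖ with hqdef
  set ip : ℝ := ⟪G, g⟫ with hipdef
  set c1 : ℝ := (1 + 2 / Kr) ^ (K - k) with hc1def
  -- basic constants
  have hη1 : η ≤ 1 / L := hη.trans (min_le_left _ _)
  have hLη : η * L ≤ 1 := by rw [le_div_iff₀ hL] at hη1; exact hη1
  have hη2 : η ≤ 1 / (192 * δ * Kr) := hη.trans (min_le_right _ _)
  have h192 : (0:ℝ) < 192 * δ * Kr := by positivity
  have hδη : η * (δ * Kr) ≤ 1 / 192 := by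
    rw [le_div_iff₀ h192] at hη2; linarith only [hη2]
  -- bounds on c1
  have hbase : (1:ℝ) ≤ 1 + 2 / Kr := by
    have h0 : (0:ℝ) ≤ 2 / Kr := by positivity
    linarith only [h0]
  have hc1low : (1:ℝ) ≤ c1 := one_le_pow₀ hbase
  have hc1up : c1 ≤ 7.4 := by
    have e2 : c1 ≤ (1 + 2 / Kr) ^ K := pow_le_pow_right₀ hbase (Nat.sub_le K k)
    have e1 : (1 + 2 / Kr) ≤ Real.exp (2 / Kr) := by
      have h0 := Real.add_one_le_exp (2 / Kr); linarith only [h0]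
    have e3 : (1 + 2 / Kr) ^ K ≤ Real.exp (2 / Kr) ^ K :=
      pow_le_pow_left₀ (by linarith only [hbase]) e1 K
    have e4 : Real.exp (2 / Kr) ^ K = Real.exp 2 := by
      rw [← Real.exp_nat_mul]
      congr 1
      field_simp
      exact hKrdef.symm
    have e5 : Real.exp 2 ≤ 7.4 := by
      have h1 : Real.exp 1 < 2.7182818286 := Real.exp_one_lt_d9
      have h2 : Real.exp 2 = Real.exp 1 * Real.exp 1 := by
        rw [← Real.exp_add]; norm_num
      nlinarith [h1, h2, Real.exp_pos 1]
    rw [e4] at e3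
    linarith only [e2, e3, e5]
  -- Lipschitz of gradient difference
  have hb : b ≤ δ * r := by
    have hl := my_grad_lip f h δ hf hh hsim x y
    have hflip : Δ = -((gradient f y - gradient h y) - (gradient f x - gradient h x)) := by
      rw [hΔdef]; abel
    rw [hbdef, hflip, norm_neg]
    exact hl
  -- decomposition g - G = Δ + e
  have hdec : g - G = Δ + e := by
    rw [hgdef, hGdef, hΔdef, he]; abel
  have hgG : ‖g - G‖ ≤ b + c := by
    rw [hdec]; exact norm_add_le _ _
  have hid : ‖g - G‖ ^ 2 = q ^ 2 - 2 * ip + a ^ 2 := by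
    rw [hqdef, hadef, hipdef, norm_sub_sq_real, real_inner_comm]
  have hgG2 : ‖g - G‖ ^ 2 ≤ (b + c) ^ 2 :=
    pow_le_pow_left₀ (norm_nonneg _) hgG 2
  -- descent
  have hyv : yplus = y + -(η • g) := by rw [hyplus, hgdef, sub_eq_add_neg]
  have D1 : f yplus ≤ f y - η * ip + L / 2 * (η * q) ^ 2 := by
    have hd := my_descent f L hfd hsmooth y (-(η • g))
    rw [← hyv] at hd
    have h1 : ⟪G, -(η • g)⟫ = -(η * ip) := by
      rw [inner_neg_right, real_inner_smul_right, hipdef]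
    have h2 : ‖-(η • g)‖ = η * q := by
      rw [norm_neg, norm_smul, Real.norm_eq_abs, abs_of_pos hη0, hqdef]
    rw [h1, h2] at hd
    linarith only [hd]
  have D2 : f yplus ≤ f y - η / 2 * a ^ 2 + η / 2 * (b + c) ^ 2 := by
    have him : q ^ 2 - 2 * ip + a ^ 2 ≤ (b + c) ^ 2 := by rw [← hid]; exact hgG2
    have t1 := mul_le_mul_of_nonneg_left him (show (0:ℝ) ≤ η / 2 by positivity)
    have t2 := mul_nonneg (mul_nonneg hη0.le (sq_nonneg q)) (sub_nonneg.mpr hLη)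
    nlinarith only [D1, t1, t2]
  -- potential bound
  have hnyx : ‖yplus - x‖ ≤ r + η * q := by
    have h1 : yplus - x = (y - x) + -(η • g) := by rw [hyv]; abel
    rw [h1]
    calc ‖(y - x) + -(η • g)‖ ≤ ‖y - x‖ + ‖-(η • g)‖ := norm_add_le _ _
      _ = r + η * q := by
          rw [norm_neg, norm_smul, Real.norm_eq_abs, abs_of_pos hη0, hrdef, hqdef]
  have hX : ‖yplus - x‖ ^ 2 ≤ (r + η * q) ^ 2 :=
    pow_le_pow_left₀ (norm_nonneg _) hnyx 2
  have P2 : (r + η * q) ^ 2 ≤ (1 + 1 / Kr) * r ^ 2 + (1 + Kr) * (η * q) ^ 2 := by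
    have key : (1 + 1 / Kr) * r ^ 2 + (1 + Kr) * (η * q) ^ 2 - (r + η * q) ^ 2
        = (r - Kr * (η * q)) ^ 2 / Kr := by
      field_simp
      ring
    have h0 := div_nonneg (sq_nonneg (r - Kr * (η * q))) hKr0.le
    linarith only [key, h0]
  set P : ℝ := δ * c1 * (1 + Kr) * η ^ 2 with hPdef
  have hP0 : 0 ≤ P := by positivity
  have hP : P ≤ η / 12 := by
    have h1 : c1 * (1 + Kr) ≤ 14.8 * Kr := by
      have t := mul_le_mul_of_nonneg_right hc1up
        (show (0:ℝ) ≤ 1 + Kr by linarith only [hKr1])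
      linarith only [t, hKr1]
    have h2 : P ≤ 14.8 * Kr * (δ * η ^ 2) := by
      have t := mul_le_mul_of_nonneg_right h1 (show (0:ℝ) ≤ δ * η ^ 2 by positivity)
      rw [hPdef]; linarith only [t]
    have h4 : 14.8 * η * (η * (δ * Kr)) ≤ 14.8 * η * (1 / 192) :=
      mul_le_mul_of_nonneg_left hδη (by positivity)
    nlinarith only [h2, h4, hη0.le]
  set S : ℝ := δ * c1 * r ^ 2 / Kr with hSdef
  have hB : (5/4) * η * b ^ 2 ≤ S := by
    have hb2 : b ^ 2 ≤ δ ^ 2 * r ^ 2 := by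
      have t := pow_le_pow_left₀ (norm_nonneg Δ) hb 2
      nlinarith only [t]
    have h5 : (5/4) * (η * (δ * Kr)) ≤ 1 := by linarith only [hδη]
    have h6 : (5/4) * η * b ^ 2 * Kr ≤ δ * r ^ 2 := by
      have t1 := mul_le_mul_of_nonneg_left hb2
        (show (0:ℝ) ≤ (5/4) * η * Kr by positivity)
      have t2 := mul_le_mul_of_nonneg_right h5
        (show (0:ℝ) ≤ δ * r ^ 2 by positivity)
      nlinarith only [t1, t2]
    have h7 : (5/4) * η * b ^ 2 ≤ δ * r ^ 2 / Kr := by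
      rw [le_div_iff₀ hKr0]; exact h6
    have h8 : δ * r ^ 2 / Kr ≤ S := by
      rw [hSdef, div_le_div_iff₀ hKr0 hKr0]
      have t := mul_le_mul_of_nonneg_right hc1low
        (show (0:ℝ) ≤ δ * r ^ 2 * Kr by positivity)
      nlinarith only [t]
    linarith only [h7, h8]
  -- combine
  have hq2 : q ≤ a + b + c := by
    have hg2 : g = G + (Δ + e) := by rw [← hdec]; abel
    rw [hqdef, hg2]
    calc ‖G + (Δ + e)‖ ≤ ‖G‖ + ‖Δ + e‖ := norm_add_le _ _
      _ ≤ a + (b + c) := by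
          have t := norm_add_le Δ e
          rw [hadef, hbdef, hcdef]; linarith only [t]
      _ = a + b + c := by ring
  have hq2' : q ^ 2 ≤ (a + b + c) ^ 2 := pow_le_pow_left₀ (norm_nonneg _) hq2 2
  have h3s : (a + b + c) ^ 2 ≤ 3 * (a ^ 2 + b ^ 2 + c ^ 2) := by
    nlinarith only [sq_nonneg (a - b), sq_nonneg (b - c), sq_nonneg (a - c)]
  have h2bc : (b + c) ^ 2 ≤ 2 * b ^ 2 + 2 * c ^ 2 := by
    nlinarith only [sq_nonneg (b - c)]
  have keyineq : η / 2 * (b + c) ^ 2 + P * (a + b + c) ^ 2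
      ≤ S + η / 4 * a ^ 2 + 2 * η * c ^ 2 := by
    have hPq : P * (a + b + c) ^ 2 ≤ (η / 12) * (3 * (a ^ 2 + b ^ 2 + c ^ 2)) :=
      mul_le_mul hP h3s (sq_nonneg _) (by positivity)
    have hbc : η / 2 * (b + c) ^ 2 ≤ η / 2 * (2 * b ^ 2 + 2 * c ^ 2) :=
      mul_le_mul_of_nonneg_left h2bc (by positivity)
    have hcc := mul_nonneg hη0.le (sq_nonneg c)
    nlinarith only [hPq, hbc, hB, hcc]
  -- final assembly
  have hrw : δ * (1 + 2 / Kr) ^ (K - k + 1) * r ^ 2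
      = δ * c1 * (1 + 1 / Kr) * r ^ 2 + S := by
    rw [pow_succ, ← hc1def, hSdef]
    field_simp
    ring
  have hXc : δ * c1 * ‖yplus - x‖ ^ 2 ≤ δ * c1 * (r + η * q) ^ 2 :=
    mul_le_mul_of_nonneg_left hX (by positivity)
  have hP2c : δ * c1 * (r + η * q) ^ 2
      ≤ δ * c1 * (1 + 1 / Kr) * r ^ 2 + P * q ^ 2 := by
    have t := mul_le_mul_of_nonneg_left P2 (show (0:ℝ) ≤ δ * c1 by positivity)
    rw [hPdef]; nlinarith only [t]
  have hPq2 : P * q ^ 2 ≤ P * (a + b + c) ^ 2 :=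
    mul_le_mul_of_nonneg_left hq2' hP0
  calc f yplus + δ * (1 + 2 / Kr) ^ (K - k) * ‖yplus - x‖ ^ 2
      = f yplus + δ * c1 * ‖yplus - x‖ ^ 2 := by rw [hc1def]
    _ ≤ (f y - η / 2 * a ^ 2 + η / 2 * (b + c) ^ 2)
        + (δ * c1 * (1 + 1 / Kr) * r ^ 2 + P * (a + b + c) ^ 2) := by
        have t := hXc.trans hP2c
        linarith only [hPq2, D2, t]
    _ ≤ f y + δ * (1 + 2 / Kr) ^ (K - k + 1) * r ^ 2 - η / 4 * a ^ 2 + 2 * η * c ^ 2 := by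
        rw [hrw]; linarith only [keyineq]
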